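/- Assume b_X < 0 and a_X + b_X > 0, and assume either a_Y + b_Y < 0, or both a_Y + b_Y > 0 and a_Y > b_Y. Then T_X'(x) < 0 for every x ∈ (1/2, 1). -/

import Mathlib

open Real Filter Set Topology

/-- QRE response of the second player. -/
noncomputable def qreY (aY bY Ty : ℝ) (x : ℝ) : ℝ :=
  (1 + Real.exp ((bY - (aY + bY) * x) / Ty))⁻¹

/-- QRE temperature curve for the first player. -/
noncomputable def qreTX (aX bX aY bY Ty : ℝ) (x : ℝ) : ℝ :=
  (bX - (aX + bX) * qreY aY bY Ty x) / Real.log (1 / x - 1)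

/-- The auxiliary function L(x) = y(x) + x(1-x) ln(1/x-1) y'(x). -/
noncomputable def qreL (aY bY Ty : ℝ) (x : ℝ) : ℝ :=
  qreY aY bY Ty x + x * (1 - x) * Real.log (1 / x - 1) * deriv (qreY aY bY Ty) x

lemma qreY_hasDerivAt (aY bY Ty : ℝ) (hTy : Ty ≠ 0) (x : ℝ) :
    HasDerivAt (qreY aY bY Ty)
      ((aY + bY) / Ty * Real.exp ((bY - (aY + bY) * x) / Ty)
        / (1 + Real.exp ((bY - (aY + bY) * x) / Ty)) ^ 2) x := by
  have h1 : HasDerivAt (fun x : ℝ => (bY - (aY + bY) * x) / Ty) (-(aY + bY) / Ty) x := by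
    have h0 : HasDerivAt (fun x : ℝ => bY - (aY + bY) * x) (-(aY + bY)) x := by
      simpa using ((hasDerivAt_id x).const_mul (aY + bY)).const_sub bY
    simpa using h0.div_const Ty
  have h3 : HasDerivAt (fun x : ℝ => 1 + Real.exp ((bY - (aY + bY) * x) / Ty))
      (Real.exp ((bY - (aY + bY) * x) / Ty) * (-(aY + bY) / Ty)) x := (h1.exp).const_add 1
  have hne : (1 + Real.exp ((bY - (aY + bY) * x) / Ty)) ≠ 0 := by positivity
  have h4 := h3.inv hne
  exact h4.congr_deriv (by ring)

set_option maxHeartbeats 1000000 in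
theorem stmt_18 (aX bX aY bY Ty : ℝ) (hTy : 0 < Ty)
    (hbX : bX < 0) (hsum : aX + bX > 0)
    (hY : aY + bY < 0 ∨ (aY + bY > 0 ∧ aY > bY)) :
    ∀ x ∈ Set.Ioo (1/2 : ℝ) 1, deriv (qreTX aX bX aY bY Ty) x < 0 := by
  intro x hx
  obtain ⟨hx1, hx2⟩ := hx
  have hx0 : (0:ℝ) < x := by linarith
  have h1x : (0:ℝ) < 1 - x := by linarith
  set E := Real.exp ((bY - (aY + bY) * x) / Ty) with hE
  have hEpos : 0 < E := Real.exp_pos _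
  have h1E : (0:ℝ) < 1 + E := by positivity
  have h1Ene : (1:ℝ) + E ≠ 0 := ne_of_gt h1E
  set c := (aY + bY) / Ty with hc
  set y' := (aY + bY) / Ty * E / (1 + E) ^ 2 with hy'def
  have hyd : HasDerivAt (qreY aY bY Ty) y' x := qreY_hasDerivAt aY bY Ty (ne_of_gt hTy) x
  -- the denominator
  have hfrac : 1 / x - 1 = (1 - x) / x := by field_simp
  have hfracpos : 0 < 1 / x - 1 := by rw [hfrac]; positivity
  have hfraclt : 1 / x - 1 < 1 := by
    rw [hfrac, div_lt_one hx0]; linarith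
  set D := Real.log (1 / x - 1) with hDdef
  have hDneg : D < 0 := Real.log_neg hfracpos hfraclt
  -- derivative of the denominator
  have hD1 : HasDerivAt (fun y : ℝ => 1 / y - 1) (-(x ^ 2)⁻¹) x := by
    simpa [one_div] using (hasDerivAt_inv (ne_of_gt hx0)).sub_const 1
  have hDd : HasDerivAt (fun y : ℝ => Real.log (1 / y - 1)) (-(x ^ 2)⁻¹ / (1 / x - 1)) x :=
    hD1.log (ne_of_gt hfracpos)
  have hD'eq : -(x ^ 2)⁻¹ / (1 / x - 1) = -(1 / (x * (1 - x))) := by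
    rw [hfrac]; field_simp
  rw [hD'eq] at hDd
  -- derivative of the numerator
  have hNd : HasDerivAt (fun y : ℝ => bX - (aX + bX) * qreY aY bY Ty y)
      (-((aX + bX) * y')) x := by
    simpa using (hyd.const_mul (aX + bX)).const_sub bX
  -- derivative of qreTX
  have hTd : HasDerivAt (qreTX aX bX aY bY Ty)
      ((-((aX + bX) * y') * D - (bX - (aX + bX) * qreY aY bY Ty x) * (-(1 / (x * (1 - x)))))
        / D ^ 2) x := hNd.div hDd (ne_of_lt hDneg)
  rw [hTd.deriv]
  have hysimp : qreY aY bY Ty x = (1 + E)⁻¹ := rfl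
  -- the key nonnegativity of L
  have hkeyL : 0 ≤ (1 + E)⁻¹ + x * (1 - x) * D * y' := by
    rcases hY with hneg | ⟨hpos, hab⟩
    · -- c < 0, so y' < 0, D < 0, term positive
      have hcneg : (aY + bY) / Ty < 0 := div_neg_of_neg_of_pos hneg hTy
      have hy'neg : y' < 0 := by
        rw [hy'def]
        apply div_neg_of_neg_of_pos
        · exact mul_neg_of_neg_of_pos hcneg hEpos
        · positivity
      have h1 : 0 < D * y' := mul_pos_of_neg_of_neg hDneg hy'neg
      have h2 : 0 < x * (1 - x) := by positivity
      have h3 : 0 < (1 + E)⁻¹ := by positivity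
      nlinarith
    · -- c > 0, aY > bY
      have hcpos : 0 < c := div_pos hpos hTy
      set t := -D with ht
      have htpos : 0 < t := by simp [ht]; linarith
      set d := x - 1/2 with hd
      have hdpos : 0 < d := by simp [hd]; linarith
      -- Step A : x(1-x) t ≤ d
      have hspos : 0 < x / (1 - x) := by positivity
      have hsgt : 1 < x / (1 - x) := by
        rw [lt_div_iff₀ h1x]; linarith
      have htlog : t = Real.log (x / (1 - x)) := by
        rw [ht, hDdef, hfrac]
        rw [show (1 - x) / x = (x / (1 - x))⁻¹ by field_simp]
        rw [Real.log_inv]; ring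
      have hsinh := Real.self_le_sinh_iff.mpr (Real.log_pos hsgt).le
      rw [Real.sinh_log hspos] at hsinh
      have heqA : x * (1 - x) * ((x / (1 - x) - (x / (1 - x))⁻¹) / 2) = d := by
        rw [hd]; field_simp; ring
      have hstepA : x * (1 - x) * t ≤ d := by
        rw [htlog, ← heqA]
        have hxx : 0 < x * (1 - x) := by positivity
        nlinarith
      -- Step B : E ≤ exp (-(c*d))
      have hstepB : E ≤ Real.exp (-(c * d)) := by
        rw [hE]
        apply Real.exp_le_exp.mpr
        rw [hc, hd]
        rw [show -((aY + bY) / Ty * (x - 1/2)) = (-(aY + bY) * (x - 1/2)) / Ty by ring]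
        exact (div_le_div_iff_of_pos_right hTy).mpr (by nlinarith)
      -- E/(1+E) ≤ E
      have hEfrac : E / (1 + E) ≤ E := by
        rw [div_le_iff₀ h1E]
        have h := mul_le_mul_of_nonneg_left (show (1:ℝ) ≤ 1 + E by linarith) hEpos.le
        simpa using h
      have hEfracnn : 0 ≤ E / (1 + E) := by positivity
      -- chain
      have hchain : c * (E / (1 + E)) * (x * (1 - x) * t) ≤ c * Real.exp (-(c * d)) * d := by
        have h1 : E / (1 + E) ≤ Real.exp (-(c * d)) := hEfrac.trans hstepB
        have h2 : 0 ≤ x * (1 - x) * t := by positivity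
        gcongr
      have hfinal : c * Real.exp (-(c * d)) * d < 1 := by
        have hle := Real.add_one_le_exp (c * d)
        have : c * Real.exp (-(c * d)) * d = (c * d) / Real.exp (c * d) := by
          rw [Real.exp_neg]; ring
        rw [this, div_lt_one (Real.exp_pos _)]
        linarith
      have hbr : c * (E / (1 + E)) * (x * (1 - x) * t) ≤ 1 := hchain.trans hfinal.le
      have heq2 : (1 + E)⁻¹ + x * (1 - x) * D * y'
          = (1 + E)⁻¹ * (1 - c * (E / (1 + E)) * (x * (1 - x) * t)) := by
        rw [hy'def, hc, ht]
        field_simp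
        ring
      rw [heq2]
      apply mul_nonneg (by positivity)
      linarith
  -- conclude
  have hxx : 0 < x * (1 - x) := by positivity
  have hkey : bX - (aX + bX) * ((1 + E)⁻¹ + x * (1 - x) * D * y') < 0 := by
    nlinarith [mul_nonneg hsum.le hkeyL]
  have hnumeq : -((aX + bX) * y') * D - (bX - (aX + bX) * qreY aY bY Ty x) * (-(1 / (x * (1 - x))))
      = (bX - (aX + bX) * ((1 + E)⁻¹ + x * (1 - x) * D * y')) / (x * (1 - x)) := by
    rw [hysimp]
    field_simp
    ring
  rw [hnumeq]
  apply div_neg_of_neg_of_pos _ (by nlinarith [hDneg])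
  exact div_neg_of_neg_of_pos hkey hxx
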